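/- Let f_n : [a,b] → ℝ be a sequence of convex piecewise-linear functions, each of whose slopes lies in the finite set {2πk : k ∈ ℤ, |k| ≤ k₀}, and suppose f_n converges pointwise to f. Then f is convex and piecewise linear with all slopes of the form 2πk for some integer k with |k| ≤ k₀. -/

import Mathlib

open Filter Set

/-- f is piecewise linear on [a,b] with all slopes belonging to S: there is a finite
partition a = t₀ < t₁ < ⋯ < t_N = b on each piece of which f is affine with slope in S. -/
def PiecewiseLinearWithSlopes (S : Set ℝ) (a b : ℝ) (f : ℝ → ℝ) : Prop :=
  ∃ N : ℕ, 0 < N ∧ ∃ t : ℕ → ℝ, t 0 = a ∧ t N = b ∧ (∀ i, i < N → t i < t (i + 1)) ∧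
    ∀ i, i < N → ∃ c s : ℝ, s ∈ S ∧ ∀ x ∈ Set.Icc (t i) (t (i + 1)), f x = c + s * x

private lemma chain_mono {t : ℕ → ℝ} {N : ℕ} (h : ∀ i, i < N → t i < t (i + 1)) :
    ∀ i j, i ≤ j → j ≤ N → t i ≤ t j := by
  intro i j hij hjN
  induction j with
  | zero =>
    have : i = 0 := Nat.le_zero.mp hij
    simp [this]
  | succ j ih =>
    rcases Nat.eq_or_lt_of_le hij with rfl | hlt
    · exact le_refl _
    · have h1 : i ≤ j := Nat.lt_succ_iff.mp hlt
      exact le_trans (ih h1 (by omega)) (h j (by omega)).le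

private lemma support_line {a b : ℝ} {f : ℝ → ℝ} (hf : ConvexOn ℝ (Set.Icc a b) f)
    {u v c s : ℝ} (hu : a ≤ u) (huv : u < v) (hv : v ≤ b)
    (haff : ∀ x ∈ Set.Icc u v, f x = c + s * x) :
    ∀ y ∈ Set.Icc a b, c + s * y ≤ f y := by
  have hua : u ∈ Set.Icc a b := ⟨hu, le_trans huv.le hv⟩
  have hva : v ∈ Set.Icc a b := ⟨le_trans hu huv.le, hv⟩
  have fu : f u = c + s * u := haff u ⟨le_refl u, huv.le⟩
  have fv : f v = c + s * v := haff v ⟨huv.le, le_refl v⟩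
  intro y hy
  rcases lt_or_ge y u with h1 | h1
  · have hs := hf.slope_mono_adjacent hy hva h1 huv
    rw [fu, fv] at hs
    have h2 : (c + s * v - (c + s * u)) / (v - u) = s := by
      rw [div_eq_iff (by linarith : v - u ≠ 0)]; ring
    rw [h2] at hs
    have h3 : f u - f y ≤ s * (u - y) := by
      have := (div_le_iff₀ (by linarith : (0:ℝ) < u - y)).mp hs
      linarith [this]
    rw [fu] at h3
    linarith
  rcases le_or_gt y v with h2 | h2
  · exact (haff y ⟨h1, h2⟩).ge
  · have hs := hf.slope_mono_adjacent hua hy huv h2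
    rw [fu, fv] at hs
    have h3 : (c + s * v - (c + s * u)) / (v - u) = s := by
      rw [div_eq_iff (by linarith : v - u ≠ 0)]; ring
    rw [h3] at hs
    have h4 : s * (y - v) ≤ f y - (c + s * v) := by
      have := (le_div_iff₀ (show (0:ℝ) < y - v by linarith)).mp hs
      linarith [this]
    linarith

private lemma exists_piece {t : ℕ → ℝ} {x : ℝ} :
    ∀ N : ℕ, 0 < N → t 0 ≤ x → x ≤ t N → ∃ i, i < N ∧ t i ≤ x ∧ x ≤ t (i + 1) := by
  intro N
  induction N with
  | zero => intro h; exact absurd h (lt_irrefl 0)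
  | succ N ih =>
    intro _ h0 hN
    rcases Nat.eq_zero_or_pos N with rfl | hpos
    · exact ⟨0, Nat.zero_lt_one, h0, hN⟩
    rcases le_or_gt x (t N) with h | h
    · obtain ⟨i, hi, ha1, ha2⟩ := ih hpos h0 h
      exact ⟨i, Nat.lt_succ_of_lt hi, ha1, ha2⟩
    · exact ⟨N, Nat.lt_succ_self N, h.le, hN⟩

private lemma rep_lemma {a b : ℝ} (hab : a < b) (k₀ : ℕ) {f : ℝ → ℝ}
    (hconv : ConvexOn ℝ (Set.Icc a b) f)
    (hpl : PiecewiseLinearWithSlopes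
      {s : ℝ | ∃ k : ℤ, |k| ≤ (k₀ : ℤ) ∧ s = 2 * Real.pi * k} a b f) :
    ∃ c : ℤ → ℝ,
      (∀ k : ℤ, |k| ≤ (k₀ : ℤ) →
        f a - 2 * Real.pi * k₀ * (b - a) - 2 * Real.pi * k₀ * (|a| + |b|) ≤ c k ∧
        c k ≤ f b + 2 * Real.pi * k₀ * (|a| + |b|)) ∧
      (∀ x ∈ Set.Icc a b, ∀ k : ℤ, |k| ≤ (k₀ : ℤ) → c k + 2 * Real.pi * k * x ≤ f x) ∧
      (∀ x ∈ Set.Icc a b, ∃ k : ℤ, |k| ≤ (k₀ : ℤ) ∧ f x = c k + 2 * Real.pi * k * x) := by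
  obtain ⟨N, hN, t, ht0, htN, hstep, hpiece⟩ := hpl
  have pi_pos := Real.pi_pos
  have tmono := chain_mono hstep
  have htmem : ∀ i, i ≤ N → t i ∈ Set.Icc a b := fun i hi =>
    ⟨ht0 ▸ tmono 0 i (Nat.zero_le i) hi, htN ▸ tmono i N hi (le_refl N)⟩
  -- uniform lower bound for f on [a,b]
  have hflow : ∀ y ∈ Set.Icc a b, f a - 2 * Real.pi * k₀ * (b - a) ≤ f y := by
    obtain ⟨c₀, s₀, ⟨k, hk, hs⟩, haff⟩ := hpiece 0 hN
    have ht1b : t 1 ≤ b := (htmem 1 hN).2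
    have hat0 : a ≤ t 0 := (htmem 0 (Nat.zero_le N)).1
    have hsupp := support_line hconv hat0 (hstep 0 hN) ht1b haff
    intro y hy
    have h1 : c₀ + s₀ * y ≤ f y := hsupp y hy
    have h2 : f a = c₀ + s₀ * a := by
      have := haff (t 0) ⟨le_refl _, (hstep 0 hN).le⟩
      rw [ht0] at this; exact this
    have hk' : -(k₀:ℤ) ≤ k := (abs_le.mp hk).1
    have hkr : -((k₀:ℝ)) ≤ (k:ℝ) := by exact_mod_cast hk'
    have hs0 : -(2 * Real.pi * k₀) ≤ s₀ := by
      rw [hs]; nlinarith [pi_pos, hkr]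
    have hya : 0 ≤ y - a := by linarith [hy.1]
    have hyb : y - a ≤ b - a := by linarith [hy.2]
    have hm1 := mul_le_mul_of_nonneg_right hs0 hya
    have hk0 : (0:ℝ) ≤ 2 * Real.pi * k₀ := by positivity
    have hm2 := mul_le_mul_of_nonneg_left hyb hk0
    nlinarith [h1, h2, hm1, hm2]
  have habs : ∀ x ∈ Set.Icc a b, |x| ≤ |a| + |b| := by
    intro x hx
    rw [abs_le]
    constructor
    · have := neg_abs_le a; linarith [hx.1, abs_nonneg b]
    · linarith [hx.2, le_abs_self b, abs_nonneg a]
  have hterm : ∀ k : ℤ, |k| ≤ (k₀:ℤ) → ∀ x ∈ Set.Icc a b,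
      |2 * Real.pi * k * x| ≤ 2 * Real.pi * k₀ * (|a| + |b|) := by
    intro k hk x hx
    have hkr : |(k:ℝ)| ≤ (k₀:ℝ) := by
      rw [← Int.cast_abs]; exact_mod_cast hk
    have h1 : |2 * Real.pi * (k:ℝ) * x| = 2 * Real.pi * |(k:ℝ)| * |x| := by
      rw [abs_mul, abs_mul, abs_of_pos (by positivity : (0:ℝ) < 2 * Real.pi)]
    rw [h1]
    have h2 : 2 * Real.pi * |(k:ℝ)| ≤ 2 * Real.pi * (k₀:ℝ) :=
      mul_le_mul_of_nonneg_left hkr (by positivity)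
    exact mul_le_mul h2 (habs x hx) (abs_nonneg x) (by positivity)
  set A : ℤ → Set ℝ := fun k => (fun x => f x - 2 * Real.pi * k * x) '' Set.Icc a b with hA
  have hamem : a ∈ Set.Icc a b := ⟨le_refl a, hab.le⟩
  have hbmem : b ∈ Set.Icc a b := ⟨hab.le, le_refl b⟩
  have hAne : ∀ k, (A k).Nonempty := fun k => ⟨_, ⟨a, hamem, rfl⟩⟩
  have hAlow : ∀ k : ℤ, |k| ≤ (k₀:ℤ) → ∀ y ∈ A k,
      f a - 2 * Real.pi * k₀ * (b - a) - 2 * Real.pi * k₀ * (|a| + |b|) ≤ y := by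
    intro k hk y hy
    obtain ⟨x, hx, rfl⟩ := hy
    have h1 := hflow x hx
    have h2 := hterm k hk x hx
    have h3 := le_abs_self (2 * Real.pi * (k:ℝ) * x)
    show _ ≤ f x - 2 * Real.pi * (k:ℝ) * x
    linarith
  have hAbdd : ∀ k : ℤ, |k| ≤ (k₀:ℤ) → BddBelow (A k) := fun k hk =>
    ⟨_, fun y hy => hAlow k hk y hy⟩
  refine ⟨fun k => sInf (A k), ?_, ?_, ?_⟩
  · intro k hk
    constructor
    · exact le_csInf (hAne k) (hAlow k hk)
    · have h1 : sInf (A k) ≤ f b - 2 * Real.pi * k * b :=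
        csInf_le (hAbdd k hk) ⟨b, hbmem, rfl⟩
      have h2 := hterm k hk b hbmem
      have h3 := neg_le_abs (2 * Real.pi * (k:ℝ) * b)
      linarith
  · intro x hx k hk
    have := csInf_le (hAbdd k hk) (⟨x, hx, rfl⟩ : f x - 2 * Real.pi * k * x ∈ A k)
    linarith
  · intro x hx
    have hx0 : t 0 ≤ x := ht0 ▸ hx.1
    have hxN : x ≤ t N := htN ▸ hx.2
    obtain ⟨i, hi, hx1, hx2⟩ := exists_piece N hN hx0 hxN
    obtain ⟨ci, si, ⟨k, hk, hs⟩, haff⟩ := hpiece i hi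
    refine ⟨k, hk, ?_⟩
    have hui : a ≤ t i := (htmem i (le_of_lt hi)).1
    have hvi : t (i + 1) ≤ b := (htmem (i + 1) hi).2
    have hsupp := support_line hconv hui (hstep i hi) hvi haff
    have hfx : f x = ci + si * x := haff x ⟨hx1, hx2⟩
    have hle : sInf (A k) ≤ f x - 2 * Real.pi * k * x :=
      csInf_le (hAbdd k hk) ⟨x, hx, rfl⟩
    have hge : f x - 2 * Real.pi * k * x ≤ sInf (A k) := by
      apply le_csInf (hAne k)
      intro y hy
      obtain ⟨z, hz, rfl⟩ := hy
      have h1 := hsupp z hz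
      show _ ≤ f z - 2 * Real.pi * (k:ℝ) * z
      rw [hfx, ← hs]
      linarith
    linarith

private lemma maxAffine_PL {a b : ℝ} (hab : a < b) (K : Finset ℤ) (hK : K.Nonempty)
    (C : ℤ → ℝ) (sl : ℤ → ℝ) :
    ∃ N : ℕ, 0 < N ∧ ∃ t : ℕ → ℝ, t 0 = a ∧ t N = b ∧ (∀ i, i < N → t i < t (i + 1)) ∧
      ∀ i, i < N → ∃ k ∈ K, ∀ x ∈ Set.Icc (t i) (t (i + 1)),
        K.sup' hK (fun j => C j + sl j * x) = C k + sl k * x := by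
  classical
  set cross : Finset ℝ :=
    ((K ×ˢ K).image fun p => (C p.2 - C p.1) / (sl p.1 - sl p.2)).filter
      (fun z => a ≤ z ∧ z ≤ b) with hcross
  set T : Finset ℝ := insert a (insert b cross) with hT
  have haT : a ∈ T := Finset.mem_insert_self _ _
  have hbT : b ∈ T := Finset.mem_insert_of_mem (Finset.mem_insert_self _ _)
  have hTmem : ∀ z ∈ T, a ≤ z ∧ z ≤ b := by
    intro z hz
    rcases Finset.mem_insert.mp hz with rfl | hz
    · exact ⟨le_refl z, hab.le⟩
    rcases Finset.mem_insert.mp hz with rfl | hz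
    · exact ⟨hab.le, le_refl z⟩
    · exact (Finset.mem_filter.mp hz).2
  set l := T.sort (· ≤ ·) with hl
  have hsort : l.SortedLT := T.sortedLT_sort
  have hmem_l : ∀ z, z ∈ l ↔ z ∈ T := fun z => Finset.mem_sort _
  have hlen : 2 ≤ l.length := by
    rw [hl, Finset.length_sort]
    exact Finset.one_lt_card.mpr ⟨a, haT, b, hbT, hab.ne⟩
  set N := l.length - 1 with hN
  set t : ℕ → ℝ := fun i => l.getD i 0 with ht
  have hget : ∀ i (h : i < l.length), t i = l.get ⟨i, h⟩ := by
    intro i h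
    show l.getD i 0 = l.get ⟨i, h⟩
    rw [List.getD_eq_getElem l 0 h, List.get_eq_getElem]
  have hmono := hsort.strictMono_get
  have hstep : ∀ i, i < N → t i < t (i + 1) := by
    intro i hi
    have h1 : i < l.length := by omega
    have h2 : i + 1 < l.length := by omega
    rw [hget i h1, hget (i + 1) h2]
    exact hmono (show (⟨i, h1⟩ : Fin l.length) < ⟨i + 1, h2⟩ by simp [Fin.lt_def])
  have ht0 : t 0 = a := by
    have h0 : 0 < l.length := by omega
    obtain ⟨q, hq⟩ := List.mem_iff_get.mp ((hmem_l a).mpr haT)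
    have h1 : l.get ⟨0, h0⟩ ≤ l.get q := hmono.monotone (by simp [Fin.le_def])
    have h2 : a ≤ l.get ⟨0, h0⟩ := (hTmem _ ((hmem_l _).mp (l.get_mem _))).1
    rw [hget 0 h0]
    exact le_antisymm (hq ▸ h1) h2
  have htNb : t N = b := by
    have h0 : N < l.length := by omega
    obtain ⟨q, hq⟩ := List.mem_iff_get.mp ((hmem_l b).mpr hbT)
    have h1 : l.get q ≤ l.get ⟨N, h0⟩ := by
      apply hmono.monotone
      simp only [Fin.le_def]
      omega
    have h2 : l.get ⟨N, h0⟩ ≤ b := (hTmem _ ((hmem_l _).mp (l.get_mem _))).2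
    rw [hget N h0]
    exact le_antisymm h2 (hq ▸ h1)
  refine ⟨N, by omega, t, ht0, htNb, hstep, ?_⟩
  intro i hi
  have hiL : i < l.length := by omega
  have hi1L : i + 1 < l.length := by omega
  have huv : t i < t (i + 1) := hstep i hi
  have hau : a ≤ t i := by
    have h1 : l.get ⟨0, by omega⟩ ≤ l.get ⟨i, hiL⟩ := hmono.monotone (by simp [Fin.le_def])
    rw [← hget 0 (by omega), ← hget i hiL] at h1
    exact ht0 ▸ h1
  have hvb : t (i + 1) ≤ b := by
    have h1 : l.get ⟨i + 1, hi1L⟩ ≤ l.get ⟨N, by omega⟩ := by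
      apply hmono.monotone
      simp only [Fin.le_def]
      omega
    rw [← hget (i + 1) hi1L, ← hget N (by omega)] at h1
    exact htNb ▸ h1
  set u := t i
  set v := t (i + 1)
  set m := (u + v) / 2 with hm
  have hum : u < m := by rw [hm]; linarith
  have hmv : m < v := by rw [hm]; linarith
  obtain ⟨k, hkK, hkmax⟩ := K.exists_max_image (fun j => C j + sl j * m) hK
  refine ⟨k, hkK, ?_⟩
  intro x hx
  refine le_antisymm ?_ (Finset.le_sup' (f := fun j => C j + sl j * x) hkK)
  apply Finset.sup'_le
  intro j hjK
  by_contra hcon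
  push_neg at hcon
  have hdm : C j + sl j * m ≤ C k + sl k * m := hkmax j hjK
  rcases eq_or_ne (sl j) (sl k) with heq | hne
  · rw [heq] at hcon hdm
    linarith
  · set z := (C k - C j) / (sl j - sl k) with hz
    have hσ : sl j - sl k ≠ 0 := sub_ne_zero.mpr hne
    have hzval : (sl j - sl k) * z = C k - C j := by
      rw [hz]; field_simp
    have hdx : 0 < (sl j - sl k) * (x - z) := by
      have : (sl j - sl k) * (x - z) = (C j + sl j * x) - (C k + sl k * x) := by
        rw [mul_sub, hzval]; ring
      rw [this]; linarith
    have hdm' : (sl j - sl k) * (m - z) ≤ 0 := by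
      have : (sl j - sl k) * (m - z) = (C j + sl j * m) - (C k + sl k * m) := by
        rw [mul_sub, hzval]; ring
      rw [this]; linarith
    have huz : u < z ∧ z < v := by
      rcases lt_or_gt_of_ne hσ with hneg | hpos
      · have h1 : x - z < 0 := by nlinarith
        have h2 : 0 ≤ m - z := by nlinarith
        exact ⟨by linarith [hx.1], by linarith⟩
      · have h1 : 0 < x - z := by nlinarith
        have h2 : m - z ≤ 0 := by nlinarith
        exact ⟨by linarith, by linarith [hx.2]⟩
    have hzT : z ∈ T := by
      apply Finset.mem_insert_of_mem
      apply Finset.mem_insert_of_mem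
      apply Finset.mem_filter.mpr
      refine ⟨?_, by constructor <;> linarith [huz.1, huz.2]⟩
      apply Finset.mem_image.mpr
      refine ⟨(j, k), Finset.mem_product.mpr ⟨hjK, hkK⟩, ?_⟩
      simp only [hz]
    obtain ⟨q, hq⟩ := List.mem_iff_get.mp ((hmem_l z).mpr hzT)
    rcases le_or_gt q.1 i with hqi | hqi
    · have h1 : l.get q ≤ l.get ⟨i, hiL⟩ := hmono.monotone (by simp [Fin.le_def, hqi])
      rw [hq, ← hget i hiL] at h1
      linarith [huz.1]
    · have h1 : l.get ⟨i + 1, hi1L⟩ ≤ l.get q := by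
        apply hmono.monotone
        simp only [Fin.le_def]
        omega
      rw [hq, ← hget (i + 1) hi1L] at h1
      linarith [huz.2]

/-- A pointwise limit of convex piecewise-linear functions on [a,b], all of whose
slopes lie in {2πk : k ∈ ℤ, |k| ≤ k₀}, is itself convex and piecewise linear with
slopes in that set. -/
theorem limit_convex_piecewise_linear (a b : ℝ) (hab : a < b) (k₀ : ℕ)
    (f : ℕ → ℝ → ℝ) (g : ℝ → ℝ)
    (hconv : ∀ n, ConvexOn ℝ (Set.Icc a b) (f n))
    (hpl : ∀ n, PiecewiseLinearWithSlopes
      {s : ℝ | ∃ k : ℤ, |k| ≤ (k₀ : ℤ) ∧ s = 2 * Real.pi * k} a b (f n))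
    (hlim : ∀ x ∈ Set.Icc a b, Tendsto (fun n => f n x) atTop (nhds (g x))) :
    ConvexOn ℝ (Set.Icc a b) g ∧
      PiecewiseLinearWithSlopes
        {s : ℝ | ∃ k : ℤ, |k| ≤ (k₀ : ℤ) ∧ s = 2 * Real.pi * k} a b g := by
  classical
  have hamem : a ∈ Set.Icc a b := ⟨le_refl a, hab.le⟩
  have hbmem : b ∈ Set.Icc a b := ⟨hab.le, le_refl b⟩
  constructor
  · refine ⟨convex_Icc a b, ?_⟩
    intro x hx y hy α β hα hβ hαβ
    have hmem := (convex_Icc a b) hx hy hα hβ hαβ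
    have h1 := hlim _ hmem
    have key : ∀ n, f n (α • x + β • y) ≤ α * f n x + β * f n y := fun n => by
      simpa [smul_eq_mul] using (hconv n).2 hx hy hα hβ hαβ
    have h2 : Tendsto (fun n => α * f n x + β * f n y) atTop (nhds (α * g x + β * g y)) :=
      ((hlim x hx).const_mul α).add ((hlim y hy).const_mul β)
    simpa [smul_eq_mul] using le_of_tendsto_of_tendsto' h1 h2 key
  · choose cc hbound hle hex using fun n => rep_lemma hab k₀ (hconv n) (hpl n)
    obtain ⟨Alo, hAlo⟩ := (hlim a hamem).bddBelow_range
    obtain ⟨Bup, hBup⟩ := (hlim b hbmem).bddAbove_range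
    set K : Finset ℤ := Finset.Icc (-(k₀:ℤ)) (k₀:ℤ) with hKdef
    have hmemK : ∀ k : ℤ, k ∈ K ↔ |k| ≤ (k₀:ℤ) := fun k => by
      rw [hKdef, Finset.mem_Icc]; exact (abs_le).symm
    have hK : K.Nonempty := ⟨0, (hmemK 0).mpr (by simp)⟩
    set lo : ℝ := Alo - 2 * Real.pi * k₀ * (b - a) - 2 * Real.pi * k₀ * (|a| + |b|) with hlo
    set hi : ℝ := Bup + 2 * Real.pi * k₀ * (|a| + |b|) with hhi
    set w : ℕ → (↥K → ℝ) := fun n k => cc n k.1 with hw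
    have hwmem : ∀ n, w n ∈ Set.Icc (fun _ : ↥K => lo) (fun _ : ↥K => hi) := by
      intro n
      constructor <;> rw [Pi.le_def] <;> intro k
      · have hb := hbound n k.1 ((hmemK k.1).mp k.2)
        have h1 : Alo ≤ f n a := hAlo (Set.mem_range_self n)
        simp only [hw, hlo]
        linarith [hb.1]
      · have hb := hbound n k.1 ((hmemK k.1).mp k.2)
        have h1 : f n b ≤ Bup := hBup (Set.mem_range_self n)
        simp only [hw, hhi]
        linarith [hb.2]
    have hcpt : IsCompact (Set.Icc (fun _ : ↥K => lo) (fun _ : ↥K => hi)) := isCompact_Icc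
    obtain ⟨W, hWmem, φ, hφ, hWlim⟩ := hcpt.tendsto_subseq hwmem
    set CC : ℤ → ℝ := fun k => if h : k ∈ K then W ⟨k, h⟩ else 0 with hCC
    have hCk : ∀ k : ℤ, k ∈ K → Tendsto (fun n => cc (φ n) k) atTop (nhds (CC k)) := by
      intro k hk
      have h1 := tendsto_pi_nhds.mp hWlim ⟨k, hk⟩
      simp only [hCC, dif_pos hk]
      simpa [hw, Function.comp] using h1
    have hfn_sup : ∀ n, ∀ x ∈ Set.Icc a b,
        f n x = K.sup' hK (fun k => cc n k + 2 * Real.pi * k * x) := by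
      intro n x hx
      apply le_antisymm
      · obtain ⟨k, hk, hfx⟩ := hex n x hx
        calc f n x = cc n k + 2 * Real.pi * k * x := hfx
          _ ≤ _ := Finset.le_sup' (f := fun k => cc n k + 2 * Real.pi * (k:ℝ) * x) ((hmemK k).mpr hk)
      · exact Finset.sup'_le _ _ (fun k hkK => hle n x hx k ((hmemK k).mp hkK))
    have hgG : ∀ x ∈ Set.Icc a b,
        g x = K.sup' hK (fun k => CC k + 2 * Real.pi * k * x) := by
      intro x hx
      have h1 : Tendsto (fun n => f (φ n) x) atTop (nhds (g x)) :=
        (hlim x hx).comp hφ.tendsto_atTop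
      have h2 : Tendsto (fun n => K.sup' hK (fun k => cc (φ n) k + 2 * Real.pi * k * x))
          atTop (nhds (K.sup' hK (fun k => CC k + 2 * Real.pi * k * x))) := by
        apply Filter.Tendsto.finset_sup'_nhds_apply hK
        intro k hkK
        exact (hCk k hkK).add_const _
      have h3 : Tendsto (fun n => f (φ n) x) atTop
          (nhds (K.sup' hK (fun k => CC k + 2 * Real.pi * k * x))) := by
        refine h2.congr fun n => (hfn_sup (φ n) x hx).symm
      exact tendsto_nhds_unique h1 h3
    obtain ⟨N, hN, t, ht0, htN, hstep, hpieces⟩ :=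
      maxAffine_PL hab K hK CC (fun k => 2 * Real.pi * k)
    refine ⟨N, hN, t, ht0, htN, hstep, ?_⟩
    intro i hi
    obtain ⟨k, hkK, hpiece⟩ := hpieces i hi
    refine ⟨CC k, 2 * Real.pi * k, ⟨k, (hmemK k).mp hkK, rfl⟩, ?_⟩
    intro x hx
    have hsub : Set.Icc (t i) (t (i + 1)) ⊆ Set.Icc a b := by
      have h1 : a ≤ t i := ht0 ▸ chain_mono hstep 0 i (Nat.zero_le i) (le_of_lt hi)
      have h2 : t (i + 1) ≤ b := htN ▸ chain_mono hstep (i + 1) N hi (le_refl N)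
      exact Set.Icc_subset_Icc h1 h2
    rw [hgG x (hsub hx)]
    exact hpiece x hx
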